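/- Let d ≥ 1 and let R₀ be a Borel subset of (-1/2, 1/2]^d that contains an open neighborhood of the origin and satisfies the boundary condition. Let t ∈ [-1/2, 1/2]^d and let Z^d_t = t + Z^d denote the translated integer lattice. Let (Δₙ) be a sequence of d × d diagonal matrices with positive diagonal entries λ₁⁽ⁿ⁾, …, λ_d⁽ⁿ⁾ such that each λᵢ⁽ⁿ⁾ → ∞ as n → ∞ and max₁≤i≤d λᵢ⁽ⁿ⁾ = O(min₁≤i≤d λᵢ⁽ⁿ⁾). Then the number of lattice points Nₙ = #(Z^d_t ∩ ΔₙR₀) satisfies Nₙ / det(Δₙ) → |R₀| as n → ∞. -/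

import Mathlib

open MeasureTheory Filter Topology

section aux
variable {d : ℕ}

def boxC (a : Fin d → ℝ) (j : Fin d → ℤ) : Set (Fin d → ℝ) :=
  Set.univ.pi fun i => Set.Icc (a i * ((j i : ℝ) - 1/2)) (a i * ((j i : ℝ) + 1/2))

def boxO (a : Fin d → ℝ) (j : Fin d → ℤ) : Set (Fin d → ℝ) :=
  Set.univ.pi fun i => Set.Ioc (a i * ((j i : ℝ) - 1/2)) (a i * ((j i : ℝ) + 1/2))

def cube (ε : ℝ) (k : Fin d → ℤ) : Set (Fin d → ℝ) :=
  Set.univ.pi fun i => Set.Icc (ε * (k i : ℝ)) (ε * ((k i : ℝ) + 1))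

lemma boxO_subset_boxC (a : Fin d → ℝ) (j : Fin d → ℤ) : boxO a j ⊆ boxC a j :=
  Set.pi_mono fun i _ => Set.Ioc_subset_Icc_self

lemma q_mem_boxC {a t : Fin d → ℝ} (ha : ∀ i, 0 < a i)
    (ht : ∀ i, t i ∈ Set.Icc (-(1/2) : ℝ) (1/2)) (j : Fin d → ℤ) :
    (fun i => a i * (t i + (j i : ℝ))) ∈ boxC a j := by
  intro i _
  obtain ⟨h1, h2⟩ := ht i
  exact ⟨by nlinarith [(ha i).le], by nlinarith [(ha i).le]⟩

lemma mem_boxO_center {a : Fin d → ℝ} (ha : ∀ i, 0 < a i) (x : Fin d → ℝ) :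
    x ∈ boxO a (fun i => ⌈x i / a i - 1/2⌉) := by
  intro i _
  have hai := ha i
  have h1 : x i / a i - 1/2 ≤ ⌈x i / a i - 1/2⌉ := Int.le_ceil _
  have h2 : (⌈x i / a i - 1/2⌉ : ℝ) < x i / a i - 1/2 + 1 := Int.ceil_lt_add_one _
  have hx : x i / a i * a i = x i := div_mul_cancel₀ _ hai.ne'
  exact ⟨by nlinarith, by nlinarith⟩

lemma boxO_disj {a : Fin d → ℝ} {j j' : Fin d → ℤ}
    {x : Fin d → ℝ} (hj : x ∈ boxO a j) (hj' : x ∈ boxO a j') : j = j' := by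
  funext i
  have h1 := hj i (Set.mem_univ i)
  have h2 := hj' i (Set.mem_univ i)
  have e1 : (j i : ℝ) < j' i + 1 := by nlinarith [h1.1, h1.2, h2.1, h2.2]
  have e2 : (j' i : ℝ) < j i + 1 := by nlinarith [h1.1, h1.2, h2.1, h2.2]
  have f1 : j i < j' i + 1 := by exact_mod_cast e1
  have f2 : j' i < j i + 1 := by exact_mod_cast e2
  omega

lemma volume_boxO {a : Fin d → ℝ} (ha : ∀ i, 0 < a i) (j : Fin d → ℤ) :
    volume (boxO a j) = ENNReal.ofReal (∏ i, a i) := by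
  rw [boxO, volume_pi_pi, ENNReal.ofReal_prod_of_nonneg (fun i _ => (ha i).le)]
  refine Finset.prod_congr rfl fun i _ => ?_
  rw [Real.volume_Ioc]
  ring_nf

lemma finite_meets {a : Fin d → ℝ} (ha : ∀ i, 0 < a i) {K : Set (Fin d → ℝ)}
    (hK : K ⊆ Set.univ.pi fun _ => Set.Icc (-(1/2) : ℝ) (1/2)) :
    {j : Fin d → ℤ | (boxC a j ∩ K).Nonempty}.Finite := by
  apply Set.Finite.subset
    (Set.Finite.pi fun i => Set.finite_Icc (⌈-(1 / (2 * a i)) - 1/2⌉) (⌊1 / (2 * a i) + 1/2⌋))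
  rintro j ⟨x, hxB, hxK⟩ i -
  have h1 := (hxB i (Set.mem_univ i)).1
  have h2 := (hxB i (Set.mem_univ i)).2
  have h3 := (hK hxK i (Set.mem_univ i)).1
  have h4 := (hK hxK i (Set.mem_univ i)).2
  have hai := ha i
  have h5 : 1/(2 * a i) * a i = 1/2 := by field_simp
  have hlo : (-(1 / (2 * a i)) - 1/2 : ℝ) ≤ j i := by nlinarith
  have hhi : (j i : ℝ) ≤ 1 / (2 * a i) + 1/2 := by nlinarith
  exact Set.mem_Icc.mpr ⟨Int.ceil_le.mpr hlo, Int.le_floor.mpr hhi⟩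

lemma finite_meets_cube {ε : ℝ} (hε : 0 < ε) {K : Set (Fin d → ℝ)}
    (hK : K ⊆ Set.univ.pi fun _ => Set.Icc (-(1/2) : ℝ) (1/2)) :
    {k : Fin d → ℤ | (cube ε k ∩ K).Nonempty}.Finite := by
  apply Set.Finite.subset
    (Set.Finite.pi fun _ => Set.finite_Icc (⌈-(1 / (2 * ε)) - 1⌉) (⌊1 / (2 * ε)⌋))
  rintro k ⟨x, hxB, hxK⟩ i -
  have h1 := (hxB i (Set.mem_univ i)).1
  have h2 := (hxB i (Set.mem_univ i)).2
  have h3 := (hK hxK i (Set.mem_univ i)).1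
  have h4 := (hK hxK i (Set.mem_univ i)).2
  have h5 : 1/(2 * ε) * ε = 1/2 := by field_simp
  have hlo : (-(1 / (2 * ε)) - 1 : ℝ) ≤ k i := by nlinarith
  have hhi : (k i : ℝ) ≤ 1 / (2 * ε) := by nlinarith
  exact Set.mem_Icc.mpr ⟨Int.ceil_le.mpr hlo, Int.le_floor.mpr hhi⟩

lemma bad_frontier {a : Fin d → ℝ} {R₀ : Set (Fin d → ℝ)} {j : Fin d → ℤ}
    (h1 : (boxC a j ∩ closure R₀).Nonempty) (h2 : (boxC a j ∩ closure R₀ᶜ).Nonempty) :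
    (boxC a j ∩ frontier R₀).Nonempty := by
  have hconv : Convex ℝ (boxC a j) := convex_pi fun i _ => convex_Icc _ _
  rw [frontier_eq_closure_inter_closure]
  refine isPreconnected_closed_iff.mp hconv.isPreconnected (closure R₀) (closure R₀ᶜ)
    isClosed_closure isClosed_closure ?_ h1 h2
  intro x _
  by_cases hx : x ∈ R₀
  · exact Or.inl (subset_closure hx)
  · exact Or.inr (subset_closure hx)

lemma bad_card {a : Fin d → ℝ} (ha : ∀ i, 0 < a i) {R₀ : Set (Fin d → ℝ)}
    (hBfin : {j : Fin d → ℤ | (boxC a j ∩ closure R₀).Nonempty ∧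
      (boxC a j ∩ closure R₀ᶜ).Nonempty}.Finite)
    {ε : ℝ} (hε0 : 0 < ε) (hεa : ∀ i, ε ≤ a i)
    (hQfin : {k : Fin d → ℤ | (cube ε k ∩ closure R₀).Nonempty ∧
      (cube ε k ∩ closure R₀ᶜ).Nonempty}.Finite) :
    {j : Fin d → ℤ | (boxC a j ∩ closure R₀).Nonempty ∧
      (boxC a j ∩ closure R₀ᶜ).Nonempty}.ncard ≤
    2 ^ d * {k : Fin d → ℤ | (cube ε k ∩ closure R₀).Nonempty ∧
      (cube ε k ∩ closure R₀ᶜ).Nonempty}.ncard := by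
  classical
  set B := {j : Fin d → ℤ | (boxC a j ∩ closure R₀).Nonempty ∧
      (boxC a j ∩ closure R₀ᶜ).Nonempty} with hBdef
  set Q := {k : Fin d → ℤ | (cube ε k ∩ closure R₀).Nonempty ∧
      (cube ε k ∩ closure R₀ᶜ).Nonempty} with hQdef
  have hfr : ∀ j ∈ B, (boxC a j ∩ frontier R₀).Nonempty := fun j hj =>
    bad_frontier hj.1 hj.2
  have hsel : ∀ j : Fin d → ℤ, ∃ x : Fin d → ℝ, j ∈ B → x ∈ boxC a j ∩ frontier R₀ := by
    intro j
    by_cases hj : j ∈ B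
    · exact (hfr j hj).imp fun x hx _ => hx
    · exact ⟨0, fun h => absurd h hj⟩
  choose pt hpt using hsel
  set F : (Fin d → ℤ) → (Fin d → ℤ) := fun j i => ⌊pt j i / ε⌋ with hFdef
  have himg : ∀ j ∈ B, F j ∈ Q := by
    intro j hj
    obtain ⟨hbox, hfro⟩ := hpt j hj
    have hmem : pt j ∈ cube ε (F j) := by
      intro i _
      have hfl : (⌊pt j i / ε⌋ : ℝ) ≤ pt j i / ε := Int.floor_le _
      have hfl2 : pt j i / ε < ⌊pt j i / ε⌋ + 1 := Int.lt_floor_add_one _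
      have hx : pt j i / ε * ε = pt j i := div_mul_cancel₀ _ hε0.ne'
      constructor
      · simp only [hFdef]; nlinarith
      · simp only [hFdef]; nlinarith
    constructor
    · exact ⟨pt j, hmem, frontier_subset_closure hfro⟩
    · refine ⟨pt j, hmem, ?_⟩
      rw [frontier_eq_closure_inter_closure] at hfro
      exact hfro.2
  have hfib : ∀ j ∈ B, ∀ i, ⌈ε * (F j i : ℝ) / a i - 1/2⌉ ≤ j i ∧
      j i ≤ ⌈ε * (F j i : ℝ) / a i - 1/2⌉ + 1 := by
    intro j hj i
    obtain ⟨hbox, hfro⟩ := hpt j hj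
    have h1 := (hbox i (Set.mem_univ i)).1
    have h2 := (hbox i (Set.mem_univ i)).2
    have hai := ha i
    have hfl : (⌊pt j i / ε⌋ : ℝ) ≤ pt j i / ε := Int.floor_le _
    have hfl2 : pt j i / ε < ⌊pt j i / ε⌋ + 1 := Int.lt_floor_add_one _
    have hxq : pt j i / ε * ε = pt j i := div_mul_cancel₀ _ hε0.ne'
    set c : ℝ := ε * (F j i : ℝ) / a i with hc
    have hca : c * a i = ε * (F j i : ℝ) := div_mul_cancel₀ _ hai.ne'
    have hFi : (F j i : ℝ) = (⌊pt j i / ε⌋ : ℝ) := rfl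
    have e1 : ε * (F j i : ℝ) ≤ pt j i := by rw [hFi]; nlinarith
    have e2 : pt j i < ε * (F j i : ℝ) + a i := by rw [hFi]; nlinarith [hεa i]
    have e3 : c - 1/2 ≤ (j i : ℝ) := by nlinarith
    have e4 : (j i : ℝ) < c + 3/2 := by nlinarith
    constructor
    · exact Int.ceil_le.mpr (by linarith)
    · have h6 : (j i : ℝ) < (⌈c - 1/2⌉ : ℝ) + 2 := lt_of_lt_of_le e4
        (by have := Int.le_ceil (c - 1/2); linarith)
      have h7 : j i < ⌈c - 1/2⌉ + 2 := by exact_mod_cast h6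
      omega
  have hcard : hBfin.toFinset.card ≤ 2 ^ d * (hBfin.toFinset.image F).card := by
    apply Finset.card_le_mul_card_image
    intro b _
    calc (hBfin.toFinset.filter (fun j => F j = b)).card
        ≤ (Finset.Icc (fun i => ⌈ε * (b i : ℝ) / a i - 1/2⌉)
            ((fun i => ⌈ε * (b i : ℝ) / a i - 1/2⌉) + 1)).card := by
          apply Finset.card_le_card
          intro j hj
          rw [Finset.mem_filter, Set.Finite.mem_toFinset] at hj
          obtain ⟨hjB, hjF⟩ := hj
          rw [Finset.mem_Icc]
          constructor <;> intro i <;>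
            · have := hfib j hjB i
              rw [hjF] at this
              simp only [Pi.add_apply, Pi.one_apply]
              omega
      _ = 2 ^ d := by
          rw [Pi.card_Icc]
          have h2 : ∀ i : Fin d, (Finset.Icc (⌈ε * (b i : ℝ) / a i - 1/2⌉)
              (⌈ε * (b i : ℝ) / a i - 1/2⌉ + 1)).card = 2 := by
            intro i; rw [Int.card_Icc]; omega
          calc ∏ i : Fin d, (Finset.Icc ((fun i => ⌈ε * (b i : ℝ) / a i - 1/2⌉) i)
              (((fun i => ⌈ε * (b i : ℝ) / a i - 1/2⌉) + 1) i)).card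
              = ∏ _i : Fin d, 2 := Finset.prod_congr rfl fun i _ => by
                simp only [Pi.add_apply, Pi.one_apply]; exact h2 i
            _ = 2 ^ d := by simp
  have himg2 : hBfin.toFinset.image F ⊆ hQfin.toFinset := by
    intro k hk
    rw [Finset.mem_image] at hk
    obtain ⟨j, hj, rfl⟩ := hk
    rw [Set.Finite.mem_toFinset] at *
    exact himg j hj
  calc B.ncard = hBfin.toFinset.card := Set.ncard_eq_toFinset_card _ hBfin
    _ ≤ 2 ^ d * (hBfin.toFinset.image F).card := hcard
    _ ≤ 2 ^ d * hQfin.toFinset.card :=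
        Nat.mul_le_mul_left _ (Finset.card_le_card himg2)
    _ = 2 ^ d * Q.ncard := by rw [← Set.ncard_eq_toFinset_card _ hQfin]

lemma vol_le_H {a : Fin d → ℝ} (ha : ∀ i, 0 < a i) {R₀ : Set (Fin d → ℝ)}
    (hHfin : {j : Fin d → ℤ | (boxC a j ∩ closure R₀).Nonempty}.Finite) :
    volume R₀ ≤ hHfin.toFinset.card • ENNReal.ofReal (∏ i, a i) := by
  have hcover : R₀ ⊆ ⋃ j ∈ hHfin.toFinset, boxO a j := by
    intro x hx
    have hmem := mem_boxO_center ha x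
    have hj : (fun i => ⌈x i / a i - 1/2⌉) ∈ hHfin.toFinset := by
      rw [Set.Finite.mem_toFinset]
      exact ⟨x, boxO_subset_boxC a _ hmem, subset_closure hx⟩
    exact Set.mem_biUnion hj hmem
  calc volume R₀ ≤ volume (⋃ j ∈ hHfin.toFinset, boxO a j) := measure_mono hcover
    _ ≤ ∑ j ∈ hHfin.toFinset, volume (boxO a j) := measure_biUnion_finset_le _ _
    _ = hHfin.toFinset.card • ENNReal.ofReal (∏ i, a i) := by
        rw [Finset.sum_congr rfl fun j _ => volume_boxO ha j, Finset.sum_const]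

lemma G_le_vol {a : Fin d → ℝ} (ha : ∀ i, 0 < a i) {R₀ : Set (Fin d → ℝ)}
    (hGfin : {j : Fin d → ℤ | boxC a j ⊆ R₀}.Finite) :
    hGfin.toFinset.card • ENNReal.ofReal (∏ i, a i) ≤ volume R₀ := by
  have hsub : (⋃ j ∈ hGfin.toFinset, boxO a j) ⊆ R₀ := by
    intro x hx
    simp only [Set.mem_iUnion, exists_prop] at hx
    obtain ⟨j, hj, hxj⟩ := hx
    rw [Set.Finite.mem_toFinset] at hj
    exact hj (boxO_subset_boxC a j hxj)
  calc hGfin.toFinset.card • ENNReal.ofReal (∏ i, a i)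
      = ∑ j ∈ hGfin.toFinset, volume (boxO a j) := by
        rw [Finset.sum_congr rfl fun j _ => volume_boxO ha j, Finset.sum_const]
    _ = volume (⋃ j ∈ hGfin.toFinset, boxO a j) := by
        refine (measure_biUnion_finset ?_ fun j _ => ?_).symm
        · intro j _ j' _ hne
          exact Set.disjoint_left.mpr fun x hx hx' => hne (boxO_disj hx hx')
        · exact MeasurableSet.univ_pi fun i => measurableSet_Ioc
    _ ≤ volume R₀ := measure_mono hsub

lemma key {C : ℝ}
    {R₀ : Set (Fin d → ℝ)}
    (hsub : R₀ ⊆ Set.univ.pi fun _ => Set.Ioc (-(1/2) : ℝ) (1/2))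
    {ε : ℝ} (hε0 : 0 < ε)
    (hbdry : (Set.ncard {k : Fin d → ℤ | (cube ε k ∩ closure R₀).Nonempty ∧
      (cube ε k ∩ closure R₀ᶜ).Nonempty} : ℝ) ≤ C * ε ^ ((1 : ℤ) - d))
    {t : Fin d → ℝ} (ht : ∀ i, t i ∈ Set.Icc (-(1/2) : ℝ) (1/2))
    {a : Fin d → ℝ} (ha : ∀ i, 0 < a i) (hεa : ∀ i, ε ≤ a i) :
    |(Set.ncard {j : Fin d → ℤ | (fun i => a i * (t i + (j i : ℝ))) ∈ R₀} : ℝ) * ∏ i, a i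
      - (volume R₀).toReal| ≤ 2 ^ d * (C * ε ^ ((1 : ℤ) - d)) * ∏ i, a i := by
  classical
  set P := ∏ i, a i with hPdef
  have hP0 : 0 < P := Finset.prod_pos fun i _ => ha i
  have hclos : closure R₀ ⊆ Set.univ.pi fun _ => Set.Icc (-(1/2) : ℝ) (1/2) := by
    refine closure_minimal (fun x hx i _ => ?_) (isClosed_set_pi fun i _ => isClosed_Icc)
    exact Set.Ioc_subset_Icc_self (hsub hx i (Set.mem_univ i))
  set S := {j : Fin d → ℤ | (fun i => a i * (t i + (j i : ℝ))) ∈ R₀} with hSdef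
  set G := {j : Fin d → ℤ | boxC a j ⊆ R₀} with hGdef
  set H := {j : Fin d → ℤ | (boxC a j ∩ closure R₀).Nonempty} with hHdef
  set B := {j : Fin d → ℤ | (boxC a j ∩ closure R₀).Nonempty ∧
      (boxC a j ∩ closure R₀ᶜ).Nonempty} with hBdef
  set Q := {k : Fin d → ℤ | (cube ε k ∩ closure R₀).Nonempty ∧
      (cube ε k ∩ closure R₀ᶜ).Nonempty} with hQdef
  have hq : ∀ j : Fin d → ℤ, (fun i => a i * (t i + (j i : ℝ))) ∈ boxC a j :=
    q_mem_boxC ha ht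
  have hGS : G ⊆ S := fun j hj => hj (hq j)
  have hSH : S ⊆ H := fun j hj => ⟨_, hq j, subset_closure hj⟩
  have hBH : B ⊆ H := fun j hj => hj.1
  have hHGB : H ⊆ G ∪ B := by
    intro j hj
    by_cases hg : boxC a j ⊆ R₀
    · exact Or.inl hg
    · obtain ⟨x, hx1, hx2⟩ := Set.not_subset.mp hg
      exact Or.inr ⟨hj, ⟨x, hx1, subset_closure hx2⟩⟩
  have hHfin : H.Finite := finite_meets ha hclos
  have hGfin : G.Finite := hHfin.subset (hGS.trans hSH)
  have hSfin : S.Finite := hHfin.subset hSH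
  have hBfin : B.Finite := hHfin.subset hBH
  have hQfin : Q.Finite := (finite_meets_cube hε0 hclos).subset fun k hk => hk.1
  -- bad count bound
  have hBcount : (B.ncard : ℝ) ≤ 2 ^ d * (C * ε ^ ((1 : ℤ) - d)) := by
    have h1 := bad_card ha hBfin hε0 hεa hQfin
    have h1' : (B.ncard : ℝ) ≤ 2 ^ d * (Q.ncard : ℝ) := by exact_mod_cast h1
    have h2 : (2 : ℝ) ^ d * (Q.ncard : ℝ) ≤ 2 ^ d * (C * ε ^ ((1 : ℤ) - d)) :=
      mul_le_mul_of_nonneg_left hbdry (by positivity)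
    linarith
  -- volume finiteness
  have hvtop : volume R₀ ≠ ⊤ := by
    have h1 : volume (Set.univ.pi fun _ : Fin d => Set.Ioc (-(1/2) : ℝ) (1/2)) = 1 := by
      rw [volume_pi_pi]
      norm_num [Real.volume_Ioc]
    exact ne_top_of_le_ne_top (by rw [h1]; exact ENNReal.one_ne_top) (measure_mono hsub)
  have hsmul_ne : ∀ n : ℕ, (n • ENNReal.ofReal P) ≠ ⊤ := fun n => by
    rw [nsmul_eq_mul]
    exact ENNReal.mul_ne_top (ENNReal.natCast_ne_top n) ENNReal.ofReal_ne_top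
  have hsmul_toReal : ∀ n : ℕ, (n • ENNReal.ofReal P).toReal = n * P := fun n => by
    rw [nsmul_eq_mul, ENNReal.toReal_mul, ENNReal.toReal_ofReal hP0.le]
    simp
  -- volume bounds
  have hlow : (volume R₀).toReal ≤ (H.ncard : ℝ) * P := by
    have := ENNReal.toReal_mono (hsmul_ne _) (vol_le_H ha hHfin)
    rwa [hsmul_toReal, ← Set.ncard_eq_toFinset_card _ hHfin] at this
  have hup : (G.ncard : ℝ) * P ≤ (volume R₀).toReal := by
    have := ENNReal.toReal_mono hvtop (G_le_vol ha hGfin)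
    rwa [hsmul_toReal, ← Set.ncard_eq_toFinset_card _ hGfin] at this
  -- cardinal inequalities
  have c1 : (S.ncard : ℝ) ≤ (H.ncard : ℝ) := by
    exact_mod_cast Set.ncard_le_ncard hSH hHfin
  have c2 : (G.ncard : ℝ) ≤ (S.ncard : ℝ) := by
    exact_mod_cast Set.ncard_le_ncard hGS hSfin
  have c3 : (H.ncard : ℝ) ≤ (G.ncard : ℝ) + (B.ncard : ℝ) := by
    have := (Set.ncard_le_ncard hHGB (hGfin.union hBfin)).trans (Set.ncard_union_le G B)
    exact_mod_cast this
  have m1 : (S.ncard : ℝ) * P ≤ (H.ncard : ℝ) * P := by nlinarith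
  have m2 : (G.ncard : ℝ) * P ≤ (S.ncard : ℝ) * P := by nlinarith
  have m3 : (H.ncard : ℝ) * P ≤ (G.ncard : ℝ) * P + (B.ncard : ℝ) * P := by nlinarith
  have m4 : (B.ncard : ℝ) * P ≤ 2 ^ d * (C * ε ^ ((1 : ℤ) - d)) * P := by nlinarith
  rw [abs_le]
  constructor <;> linarith

end aux

/-- lattice point count in an inflated region is asymptotic to its volume. -/
theorem stmt_0 (d : ℕ) (hd : 1 ≤ d)
    (R₀ : Set (Fin d → ℝ)) (hmeas : MeasurableSet R₀)
    (hsub : R₀ ⊆ Set.univ.pi fun _ => Set.Ioc (-(1/2) : ℝ) (1/2))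
    (hnbhd : R₀ ∈ 𝓝 (0 : Fin d → ℝ))
    (hbdry : ∃ C : ℝ, 0 < C ∧ ∀ a : ℝ, 0 < a → a ≤ 1 →
      (Set.ncard {j : Fin d → ℤ |
        (Set.univ.pi (fun i => Set.Icc (a * (j i : ℝ)) (a * ((j i : ℝ) + 1))) ∩
          closure R₀).Nonempty ∧
        (Set.univ.pi (fun i => Set.Icc (a * (j i : ℝ)) (a * ((j i : ℝ) + 1))) ∩
          closure R₀ᶜ).Nonempty} : ℝ) ≤ C * a ^ ((1 : ℤ) - d))
    (t : Fin d → ℝ) (ht : ∀ i, t i ∈ Set.Icc (-(1/2) : ℝ) (1/2))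
    (lam : ℕ → Fin d → ℝ) (hpos : ∀ n i, 0 < lam n i)
    (htend : ∀ i, Tendsto (fun n => lam n i) atTop atTop)
    (hmaxmin : ∃ C : ℝ, ∀ n i j, lam n i ≤ C * lam n j) :
    Tendsto (fun n =>
      (Set.ncard {j : Fin d → ℤ |
        (fun i => t i + (j i : ℝ)) ∈ (fun x i => lam n i * x i) '' R₀} : ℝ) / ∏ i, lam n i)
      atTop (𝓝 (volume R₀).toReal) := by
  classical
  obtain ⟨C, hC, hbdry⟩ := hbdry
  obtain ⟨C', hC'⟩ := hmaxmin
  haveI : Nonempty (Fin d) := ⟨⟨0, hd⟩⟩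
  set i₀ : Fin d := ⟨0, hd⟩ with hi₀
  have hC'1 : (1 : ℝ) ≤ C' := by
    have h := hC' 0 i₀ i₀
    nlinarith [hpos 0 i₀]
  set a : ℕ → Fin d → ℝ := fun n i => (lam n i)⁻¹ with hadef
  have hapos : ∀ n i, 0 < a n i := fun n i => inv_pos.mpr (hpos n i)
  set M : ℕ → ℝ := fun n => Finset.univ.sup' Finset.univ_nonempty (lam n) with hMdef
  have hlamM : ∀ n i, lam n i ≤ M n := fun n i =>
    Finset.le_sup' (lam n) (Finset.mem_univ i)
  have hMpos : ∀ n, 0 < M n := fun n => lt_of_lt_of_le (hpos n i₀) (hlamM n i₀)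
  set ε : ℕ → ℝ := fun n => (M n)⁻¹ with hεdef
  have hε0 : ∀ n, 0 < ε n := fun n => inv_pos.mpr (hMpos n)
  have hεa : ∀ n i, ε n ≤ a n i := fun n i =>
    inv_anti₀ (hpos n i) (hlamM n i)
  have haC : ∀ n i, a n i ≤ C' * ε n := by
    intro n i
    obtain ⟨i₁, -, hM1⟩ := Finset.exists_mem_eq_sup' Finset.univ_nonempty (lam n)
    have h1 : M n ≤ C' * lam n i := hM1.le.trans (hC' n i₁ i)
    have h2 : (lam n i)⁻¹ * lam n i = 1 := inv_mul_cancel₀ (hpos n i).ne'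
    have h3 : (M n)⁻¹ * M n = 1 := inv_mul_cancel₀ (hMpos n).ne'
    nlinarith [hpos n i, hMpos n, hε0 n, hapos n i,
      mul_pos (hε0 n) (hapos n i)]
  -- product identities/bounds
  have hprod_ia : ∀ n, ∏ i, a n i = (∏ i, lam n i)⁻¹ := fun n => by
    rw [← Finset.prod_inv_distrib]
  have hprod_le : ∀ n, ∏ i, a n i ≤ (C' * ε n) ^ d := by
    intro n
    calc ∏ i, a n i ≤ ∏ _i : Fin d, (C' * ε n) :=
          Finset.prod_le_prod (fun i _ => (hapos n i).le) (fun i _ => haC n i)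
      _ = (C' * ε n) ^ d := by simp
  -- set rewriting
  have hset : ∀ n, {j : Fin d → ℤ |
      (fun i => t i + (j i : ℝ)) ∈ (fun x i => lam n i * x i) '' R₀} =
      {j : Fin d → ℤ | (fun i => a n i * (t i + (j i : ℝ))) ∈ R₀} := by
    intro n
    ext j
    simp only [Set.mem_setOf_eq, Set.mem_image]
    constructor
    · rintro ⟨x, hx, hxe⟩
      have hxj : x = fun i => a n i * (t i + (j i : ℝ)) := by
        funext i
        have h := congrFun hxe i
        simp only [hadef]
        rw [← h, ← mul_assoc, inv_mul_cancel₀ (hpos n i).ne', one_mul]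
      rwa [hxj] at hx
    · intro hx
      refine ⟨_, hx, ?_⟩
      funext i
      simp only [hadef]
      rw [← mul_assoc, mul_inv_cancel₀ (hpos n i).ne', one_mul]
  -- ε tends to zero
  have hMtend : Tendsto M atTop atTop :=
    tendsto_atTop_mono (fun n => hlamM n i₀) (htend i₀)
  have hεtend : Tendsto ε atTop (𝓝 0) := hMtend.inv_tendsto_atTop
  -- final squeeze
  rw [← tendsto_sub_nhds_zero_iff]
  apply squeeze_zero_norm' (a := fun n => 2 ^ d * C * C' ^ d * ε n)
  · filter_upwards [hMtend.eventually_ge_atTop 1] with n hMn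
    have hε1 : ε n ≤ 1 := by
      simp only [hεdef]
      exact inv_le_one_of_one_le₀ hMn
    have hbd := hbdry (ε n) (hε0 n) hε1
    have hkey := key hsub (hε0 n) hbd ht (hapos n) (hεa n)
    rw [hset n, Real.norm_eq_abs, div_eq_mul_inv, ← hprod_ia n]
    have hzp : (ε n) ^ ((1:ℤ) - d) * (ε n) ^ (d : ℕ) = ε n := by
      rw [← zpow_natCast (ε n) d, ← zpow_add₀ (hε0 n).ne']
      norm_num
    have hA0 : (0:ℝ) ≤ 2 ^ d * (C * (ε n) ^ ((1:ℤ) - d)) := by positivity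
    calc |(Set.ncard {j : Fin d → ℤ | (fun i => a n i * (t i + (j i : ℝ))) ∈ R₀} : ℝ)
          * ∏ i, a n i - (volume R₀).toReal|
        ≤ 2 ^ d * (C * (ε n) ^ ((1:ℤ) - d)) * ∏ i, a n i := hkey
      _ ≤ 2 ^ d * (C * (ε n) ^ ((1:ℤ) - d)) * (C' * ε n) ^ d :=
          mul_le_mul_of_nonneg_left (hprod_le n) hA0
      _ = 2 ^ d * C * C' ^ d * ((ε n) ^ ((1:ℤ) - d) * (ε n) ^ (d : ℕ)) := by
          rw [mul_pow]; ring
      _ = 2 ^ d * C * C' ^ d * ε n := by rw [hzp]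
  · have : Tendsto (fun n => 2 ^ d * C * C' ^ d * ε n) atTop (𝓝 (2 ^ d * C * C' ^ d * 0)) :=
      hεtend.const_mul _
    simpa using this
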